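/- Let Q₀ ≥ 0, σ₁ be real numbers and let t₀ ≥ 10. Then for all real σ with −Q₀ ≤ σ ≤ σ₁ and all real t ≥ t₀, the principal branch of the complex logarithm satisfies |log(Q₀ + σ + it)| ≤ (1 + a₀(σ₁, Q₀, t₀))·log t, where a₀(σ₁, Q₀, t₀) = (σ₁ + Q₀)/(2t₀² log t₀) + π/(2 log t₀) + π(σ₁ + Q₀)²/(4 t₀ log² t₀). -/

import Mathlib

open Real Complex

set_option maxHeartbeats 1000000

/-- `a₀(σ, Q₀, t) = (σ+Q₀)/(2t² log t) + π/(2 log t) + π(σ+Q₀)²/(4t log² t)`. -/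
noncomputable def a₀ (σ Q₀ t : ℝ) : ℝ :=
  (σ + Q₀) / (2 * t ^ 2 * Real.log t) + Real.pi / (2 * Real.log t) +
    Real.pi * (σ + Q₀) ^ 2 / (4 * t * (Real.log t) ^ 2)

theorem abs_complex_log_le (Q₀ σ₁ t₀ : ℝ) (hQ₀ : 0 ≤ Q₀) (ht₀ : 10 ≤ t₀) :
    ∀ σ t : ℝ, -Q₀ ≤ σ → σ ≤ σ₁ → t₀ ≤ t →
      ‖Complex.log ((Q₀ : ℂ) + (σ : ℂ) + (t : ℂ) * Complex.I)‖
        ≤ (1 + a₀ σ₁ Q₀ t₀) * Real.log t := by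
  intro σ t hσ hσ₁ ht
  set x : ℝ := Q₀ + σ with hxdef
  have hx0 : 0 ≤ x := by simp [hxdef]; linarith
  have ht0pos : (0:ℝ) < t₀ := by linarith
  have htt : t₀ ≤ t := ht
  have htpos : (0:ℝ) < t := by linarith
  have ht1 : (1:ℝ) < t := by linarith
  have hlogt : 0 < Real.log t := Real.log_pos ht1
  have hlogt₀ : 0 < Real.log t₀ := Real.log_pos (by linarith)
  have hlogmono : Real.log t₀ ≤ Real.log t := Real.log_le_log ht0pos htt
  set z : ℂ := (Q₀ : ℂ) + (σ : ℂ) + (t : ℂ) * Complex.I with hzdef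
  have hre : z.re = x := by simp [hzdef, hxdef]
  have him : z.im = t := by simp [hzdef]
  have hz0 : z ≠ 0 := by
    intro h
    rw [h] at him
    simp at him
    linarith
  have habs_sq : ‖z‖ ^ 2 = x ^ 2 + t ^ 2 := by
    rw [Complex.sq_norm, Complex.normSq_apply, hre, him]; ring
  have habs_ge : t ≤ ‖z‖ := by
    have := Complex.abs_im_le_norm z
    rw [him] at this
    calc t = |t| := (abs_of_pos htpos).symm
    _ ≤ _ := this
  have habs1 : 1 ≤ ‖z‖ := by linarith
  have habspos : 0 < ‖z‖ := by linarith
  -- step 1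
  have h1 : ‖Complex.log z‖ ≤ Real.log (‖z‖) + π / 2 := by
    refine (Complex.norm_le_abs_re_add_abs_im _).trans ?_
    rw [Complex.log_re, Complex.log_im]
    have harg : |Complex.arg z| ≤ π / 2 :=
      Complex.abs_arg_le_pi_div_two_iff.mpr (by rw [hre]; exact hx0)
    have : |Real.log (‖z‖)| = Real.log (‖z‖) :=
      abs_of_nonneg (Real.log_nonneg habs1)
    linarith
  -- step 2: log |z| ≤ log t + x²/(2t²)
  have h2 : Real.log (‖z‖) ≤ Real.log t + x ^ 2 / (2 * t ^ 2) := by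
    have hsq : 2 * Real.log (‖z‖) = Real.log (x ^ 2 + t ^ 2) := by
      rw [← habs_sq, Real.log_pow]; push_cast; ring
    have hpos : (0:ℝ) < (x ^ 2 + t ^ 2) / t ^ 2 := by positivity
    have hlb : Real.log ((x ^ 2 + t ^ 2) / t ^ 2) ≤ (x ^ 2 + t ^ 2) / t ^ 2 - 1 :=
      Real.log_le_sub_one_of_pos hpos
    have hsplit : Real.log ((x ^ 2 + t ^ 2) / t ^ 2)
        = Real.log (x ^ 2 + t ^ 2) - 2 * Real.log t := by
      rw [Real.log_div (by positivity) (by positivity), Real.log_pow]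
      push_cast; ring
    have hsub : (x ^ 2 + t ^ 2) / t ^ 2 - 1 = x ^ 2 / t ^ 2 := by
      field_simp; ring
    rw [hsplit, hsub] at hlb
    have : x ^ 2 / (2 * t ^ 2) = (x ^ 2 / t ^ 2) / 2 := by ring
    linarith
  -- step 3: x²/(2t²) + π/2 ≤ a₀ σ₁ Q₀ t₀ * log t
  have hπ : (2:ℝ) ≤ π := by linarith [Real.pi_gt_three]
  have hs : x ≤ σ₁ + Q₀ := by simp [hxdef]; linarith
  have hs0 : 0 ≤ σ₁ + Q₀ := le_trans hx0 hs
  have h3 : x ^ 2 / (2 * t ^ 2) + π / 2 ≤ a₀ σ₁ Q₀ t₀ * Real.log t := by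
    have hA : (0:ℝ) ≤ (σ₁ + Q₀) / (2 * t₀ ^ 2 * Real.log t₀) * Real.log t := by
      positivity
    have hB : π / 2 ≤ π / (2 * Real.log t₀) * Real.log t := by
      rw [div_mul_eq_mul_div, le_div_iff₀ (by positivity)]
      nlinarith [Real.pi_pos]
    have hC : x ^ 2 / (2 * t ^ 2) ≤
        π * (σ₁ + Q₀) ^ 2 / (4 * t₀ * Real.log t₀ ^ 2) * Real.log t := by
      have hx2 : x ^ 2 ≤ (σ₁ + Q₀) ^ 2 := by nlinarith
      have hlt₀ : Real.log t₀ ≤ t₀ := by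
        have := Real.log_le_sub_one_of_pos ht0pos; linarith
      have key : 4 * t₀ * Real.log t₀ ^ 2 ≤ π * Real.log t * (2 * t₀ ^ 2) := by
        nlinarith [mul_nonneg (mul_nonneg ht0pos.le (sub_nonneg.mpr hlt₀)) hlogt₀.le,
          mul_nonneg (mul_nonneg ht0pos.le ht0pos.le) (sub_nonneg.mpr hlogmono),
          mul_nonneg (mul_nonneg (sub_nonneg.mpr hπ) (mul_nonneg ht0pos.le ht0pos.le)) hlogt.le]
      calc x ^ 2 / (2 * t ^ 2) ≤ (σ₁ + Q₀) ^ 2 / (2 * t₀ ^ 2) := by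
            apply div_le_div₀ (by positivity) hx2 (by positivity) (by nlinarith)
      _ ≤ π * (σ₁ + Q₀) ^ 2 / (4 * t₀ * Real.log t₀ ^ 2) * Real.log t := by
            rw [div_mul_eq_mul_div, div_le_div_iff₀ (by positivity) (by positivity)]
            nlinarith [mul_le_mul_of_nonneg_left key (sq_nonneg (σ₁ + Q₀))]
    unfold a₀
    rw [add_mul, add_mul]
    linarith
  linarith
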